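/- Let G be a connected graph on n vertices and let s, m, b be positive integers with s < n. Let 𝒮(s,m,b) be the collection of vertex sets S with |S| = s such that the subgraph of G induced on S has exactly m connected components S₁,…,S_m and |N_G(S₁)| + … + |N_G(S_m)| = b. Then |𝒮(s,m,b)| ≤ C(n,m)·C(s−1,m−1)·C(b−1,m−1)·C(s+b−m, b), where C(·,·) is the binomial coefficient. -/

import Mathlib

namespace CountAux

open Finset

variable {V : Type*} [Fintype V] [DecidableEq V] [LinearOrder V] (G : SimpleGraph V)
  [DecidableRel G.Adj]

/-- external boundary as a finset -/
def bdF (A : Finset V) : Finset V := univ.filter fun x => x ∉ A ∧ ∃ u ∈ A, G.Adj u x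

lemma mem_bdF {A : Finset V} {x : V} : x ∈ bdF G A ↔ x ∉ A ∧ ∃ u ∈ A, G.Adj u x := by
  simp [bdF]

/-- undecided vertices adjacent to the current inside set -/
def cand (I D : Finset V) : Finset V := univ.filter fun q => q ∉ D ∧ ∃ u ∈ I, G.Adj u q

lemma mem_cand {I D : Finset V} {q : V} : q ∈ cand G I D ↔ q ∉ D ∧ ∃ u ∈ I, G.Adj u q := by
  simp [cand]

def steps (A : Finset V) : ℕ → Finset V → Finset V → List Bool
  | 0, _, _ => []
  | n + 1, I, D =>
    if h : (cand G I D).Nonempty then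
      decide ((cand G I D).min' h ∈ A) ::
        steps A n (if (cand G I D).min' h ∈ A then insert ((cand G I D).min' h) I else I)
          (insert ((cand G I D).min' h) D)
    else []

def runI (A : Finset V) : ℕ → Finset V → Finset V → Finset V
  | 0, I, _ => I
  | n + 1, I, D =>
    if h : (cand G I D).Nonempty then
      runI A n (if (cand G I D).min' h ∈ A then insert ((cand G I D).min' h) I else I)
        (insert ((cand G I D).min' h) D)
    else I

def runD (A : Finset V) : ℕ → Finset V → Finset V → Finset V
  | 0, _, D => D
  | n + 1, I, D =>
    if h : (cand G I D).Nonempty then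
      runD A n (if (cand G I D).min' h ∈ A then insert ((cand G I D).min' h) I else I)
        (insert ((cand G I D).min' h) D)
    else D

def decode : List Bool → Finset V → Finset V → Finset V
  | [], I, _ => I
  | x :: L, I, D =>
    if h : (cand G I D).Nonempty then
      decode L (if x then insert ((cand G I D).min' h) I else I)
        (insert ((cand G I D).min' h) D)
    else I

lemma decode_steps (A : Finset V) :
    ∀ (n : ℕ) (I D : Finset V), decode G (steps G A n I D) I D = runI G A n I D
  | 0, I, D => rfl
  | n + 1, I, D => by
    rw [steps, runI]
    by_cases h : (cand G I D).Nonempty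
    · rw [dif_pos h, dif_pos h, decode, dif_pos h]
      simp only [decide_eq_true_eq]
      exact decode_steps A n _ _
    · rw [dif_neg h, dif_neg h, decode]

lemma inter_update (A I D : Finset V) (hI : I = A ∩ D) (q : V) :
    (if q ∈ A then insert q I else I) = A ∩ insert q D := by
  subst hI
  by_cases hq : q ∈ A
  · rw [if_pos hq]; ext x
    simp only [mem_insert, mem_inter]
    constructor
    · rintro (rfl | ⟨h1, h2⟩)
      · exact ⟨hq, Or.inl rfl⟩
      · exact ⟨h1, Or.inr h2⟩
    · rintro ⟨h1, rfl | h2⟩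
      · exact Or.inl rfl
      · exact Or.inr ⟨h1, h2⟩
  · rw [if_neg hq]; ext x
    simp only [mem_inter, mem_insert]
    constructor
    · rintro ⟨h1, h2⟩; exact ⟨h1, Or.inr h2⟩
    · rintro ⟨h1, h2 | h3⟩
      · exact absurd (h2 ▸ h1) hq
      · exact ⟨h1, h3⟩

lemma runI_inter (A : Finset V) :
    ∀ (n : ℕ) (I D : Finset V), I = A ∩ D → runI G A n I D = A ∩ runD G A n I D
  | 0, I, D, hI => hI
  | n + 1, I, D, hI => by
    rw [runI, runD]
    by_cases h : (cand G I D).Nonempty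
    · rw [dif_pos h, dif_pos h]
      exact runI_inter A n _ _ (inter_update A I D hI _)
    · rw [dif_neg h, dif_neg h]; exact hI

lemma subset_runI (A : Finset V) :
    ∀ (n : ℕ) (I D : Finset V), I ⊆ runI G A n I D
  | 0, I, D => subset_rfl
  | n + 1, I, D => by
    rw [runI]
    by_cases h : (cand G I D).Nonempty
    · rw [dif_pos h]
      refine subset_trans ?_ (subset_runI A n _ _)
      by_cases h2 : (cand G I D).min' h ∈ A
      · rw [if_pos h2]; exact subset_insert _ _
      · rw [if_neg h2]
    · rw [dif_neg h]

lemma runD_subset (A : Finset V) :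
    ∀ (n : ℕ) (I D : Finset V), I = A ∩ D → D ⊆ A ∪ bdF G A →
      runD G A n I D ⊆ A ∪ bdF G A
  | 0, I, D, _, hD => hD
  | n + 1, I, D, hI, hD => by
    rw [runD]
    by_cases h : (cand G I D).Nonempty
    · rw [dif_pos h]
      refine runD_subset A n _ _ (inter_update A I D hI _) ?_
      have hqc : (cand G I D).min' h ∈ cand G I D := (cand G I D).min'_mem h
      rw [mem_cand] at hqc
      obtain ⟨hqD, u, huI, hadj⟩ := hqc
      apply insert_subset _ hD
      by_cases hqA : (cand G I D).min' h ∈ A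
      · exact mem_union_left _ hqA
      · refine mem_union_right _ ?_
        rw [mem_bdF]
        exact ⟨hqA, u, by rw [hI] at huI; exact (mem_inter.1 huI).1, hadj⟩
    · rw [dif_neg h]; exact hD

lemma cand_run_empty (A : Finset V) :
    ∀ (n : ℕ) (I D : Finset V), Fintype.card V ≤ n + D.card →
      cand G (runI G A n I D) (runD G A n I D) = ∅
  | 0, I, D, hn => by
    rw [runI, runD]
    have hD : D = univ := by
      apply Finset.eq_univ_of_card
      have := Finset.card_le_univ D
      omega
    ext q
    simp [mem_cand, hD]
  | n + 1, I, D, hn => by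
    rw [runI, runD]
    by_cases h : (cand G I D).Nonempty
    · rw [dif_pos h, dif_pos h]
      apply cand_run_empty A n
      have hqc : (cand G I D).min' h ∈ cand G I D := (cand G I D).min'_mem h
      rw [mem_cand] at hqc
      rw [card_insert_of_notMem hqc.1]
      omega
    · rw [dif_neg h, dif_neg h]
      exact not_nonempty_iff_eq_empty.1 h

lemma card_runD (A : Finset V) :
    ∀ (n : ℕ) (I D : Finset V), (runD G A n I D).card = D.card + (steps G A n I D).length
  | 0, I, D => by rw [runD, steps]; simp
  | n + 1, I, D => by
    rw [runD, steps]
    by_cases h : (cand G I D).Nonempty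
    · rw [dif_pos h, dif_pos h, card_runD A n, List.length_cons]
      have hqc : (cand G I D).min' h ∈ cand G I D := (cand G I D).min'_mem h
      rw [mem_cand] at hqc
      rw [card_insert_of_notMem hqc.1]
      omega
    · rw [dif_neg h, dif_neg h]; simp

lemma card_runI (A : Finset V) :
    ∀ (n : ℕ) (I D : Finset V), I = A ∩ D →
      (runI G A n I D).card = I.card + (steps G A n I D).count true
  | 0, I, D, _ => by rw [runI, steps]; simp
  | n + 1, I, D, hI => by
    rw [runI, steps]
    by_cases h : (cand G I D).Nonempty
    · rw [dif_pos h, dif_pos h, card_runI A n _ _ (inter_update A I D hI _)]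
      have hqc : (cand G I D).min' h ∈ cand G I D := (cand G I D).min'_mem h
      rw [mem_cand] at hqc
      by_cases hqA : (cand G I D).min' h ∈ A
      · rw [if_pos hqA]
        have hID : I ⊆ D := by rw [hI]; exact inter_subset_right
        have hqI : (cand G I D).min' h ∉ I := fun hc => hqc.1 (hID hc)
        rw [card_insert_of_notMem hqI]
        simp [hqA, List.count_cons]
        omega
      · rw [if_neg hqA]
        simp [hqA, List.count_cons]
    · rw [dif_neg h, dif_neg h]; simp

lemma count_false_add_count_true (L : List Bool) : L.count false + L.count true = L.length := by
  induction L with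
  | nil => simp
  | cons a L ih =>
    cases a <;> simp [List.count_cons] <;> omega


lemma subset_of_cand_empty (A I D : Finset V)
    (hconn : (G.induce (A : Set V)).Connected) (hI : I = A ∩ D)
    (hne : I.Nonempty) (hcand : cand G I D = ∅) : A ⊆ I := by
  obtain ⟨v, hvI⟩ := hne
  have hID : I ⊆ A := by rw [hI]; exact inter_subset_left
  have hvA : v ∈ A := hID hvI
  intro w hwA
  obtain ⟨p⟩ := hconn.preconnected ⟨v, hvA⟩ ⟨w, hwA⟩
  suffices H : ∀ (x y : (A : Set V)) (p : (G.induce (A : Set V)).Walk x y),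
      x.1 ∈ I → y.1 ∈ I from H _ _ p hvI
  intro x y p
  induction p with
  | nil => exact fun h => h
  | @cons x y z hadj p ih =>
    intro hx
    apply ih
    by_contra hy
    have hyD : y.1 ∉ D := by
      intro hyD
      exact hy (by rw [hI]; exact mem_inter.2 ⟨y.2, hyD⟩)
    have : y.1 ∈ cand G I D := by
      rw [mem_cand]
      exact ⟨hyD, x.1, hx, by simpa using hadj⟩
    rw [hcand] at this
    exact absurd this (notMem_empty _)

lemma bdF_nonempty (hG : G.Connected) (A : Finset V) (hA : A.Nonempty) (hAu : A ≠ univ) :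
    (bdF G A).Nonempty := by
  obtain ⟨u, hu⟩ := hA
  obtain ⟨w, hw⟩ : ∃ w, w ∉ A := by
    by_contra hc
    push_neg at hc
    exact hAu (eq_univ_iff_forall.2 hc)
  obtain ⟨p⟩ := hG.preconnected u w
  suffices H : ∀ (x y : V) (p : G.Walk x y), x ∈ A → y ∉ A → (bdF G A).Nonempty from
    H u w p hu hw
  intro x y p
  induction p with
  | nil => exact fun h1 h2 => absurd h1 h2
  | @cons x y z hadj p ih =>
    intro h1 h2
    by_cases hm : y ∈ A
    · exact ih hm h2
    · exact ⟨y, (mem_bdF G).2 ⟨hm, x, h1, hadj⟩⟩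

variable [Nonempty V]

noncomputable def root (A : Finset V) : V :=
  if h : A.Nonempty then A.min' h else Classical.arbitrary V

lemma root_mem (A : Finset V) (h : A.Nonempty) : root A ∈ A := by
  rw [root, dif_pos h]; exact A.min'_mem h

noncomputable def encode1 (A : Finset V) : List Bool :=
  steps G A (Fintype.card V) {root A} {root A}

theorem component_props (A : Finset V) (hA : A.Nonempty)
    (hc : (G.induce (A : Set V)).Connected) :
    decode G (encode1 G A) {root A} {root A} = A ∧
    (encode1 G A).length + 1 = A.card + (bdF G A).card ∧
    (encode1 G A).count false = (bdF G A).card := by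
  set v := root A with hv
  have hvA : v ∈ A := root_mem A hA
  have hI0 : ({v} : Finset V) = A ∩ {v} := (inter_singleton_of_mem hvA).symm
  have hfuel : Fintype.card V ≤ Fintype.card V + ({v} : Finset V).card :=
    Nat.le_add_right _ _
  have hcand := cand_run_empty G A (Fintype.card V) {v} {v} hfuel
  have hinter := runI_inter G A (Fintype.card V) {v} {v} hI0
  have hvIf := subset_runI G A (Fintype.card V) {v} {v} (mem_singleton_self v)
  set If := runI G A (Fintype.card V) {v} {v} with hIf'
  set Df := runD G A (Fintype.card V) {v} {v} with hDf'
  have hIfA : A ⊆ If := subset_of_cand_empty G A If Df hc hinter ⟨v, hvIf⟩ hcand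
  have hIfA2 : If ⊆ A := by rw [hinter]; exact inter_subset_left
  have hIf : If = A := le_antisymm hIfA2 hIfA
  have hDsub : Df ⊆ A ∪ bdF G A := by
    refine runD_subset G A (Fintype.card V) {v} {v} hI0 ?_
    rw [singleton_subset_iff]
    exact mem_union_left _ hvA
  have hADf : A ⊆ Df := by
    rw [hIf] at hinter
    intro a ha
    rw [hinter] at ha
    exact (mem_inter.1 ha).2
  have hbdDf : bdF G A ⊆ Df := by
    intro x hx
    by_contra hxD
    rw [mem_bdF G] at hx
    obtain ⟨hxA, u, huA, hadj⟩ := hx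
    have : x ∈ cand G If Df := (mem_cand G).2 ⟨hxD, u, hIf.symm ▸ huA, hadj⟩
    rw [hcand] at this
    exact absurd this (notMem_empty _)
  have hDf : Df = A ∪ bdF G A := le_antisymm hDsub (union_subset hADf hbdDf)
  have hdisj : Disjoint A (bdF G A) := by
    rw [disjoint_left]
    intro a ha hb
    exact ((mem_bdF G).1 hb).1 ha
  have hcardD := card_runD G A (Fintype.card V) {v} {v}
  have hcardI := card_runI G A (Fintype.card V) {v} {v} hI0
  rw [← hDf'] at hcardD
  rw [← hIf'] at hcardI
  rw [hDf, card_union_of_disjoint hdisj, card_singleton] at hcardD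
  rw [hIf, card_singleton] at hcardI
  have hcf := count_false_add_count_true (encode1 G A)
  refine ⟨?_, ?_, ?_⟩
  · rw [encode1, ← hv, decode_steps, ← hIf', hIf]
  · rw [encode1, ← hv] at hcf ⊢
    omega
  · rw [encode1, ← hv] at hcf ⊢
    omega




/-- partial sums of a tuple -/
def psum {m t : ℕ} (a : Fin m → Fin (t + 1)) (k : ℕ) : ℕ :=
  ∑ j ∈ univ.filter (fun j : Fin m => (j : ℕ) < k), (a j : ℕ)

lemma psum_zero {m t : ℕ} (a : Fin m → Fin (t + 1)) : psum a 0 = 0 := by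
  simp [psum]

lemma psum_top {m t : ℕ} (a : Fin m → Fin (t + 1)) : psum a m = ∑ i, (a i : ℕ) := by
  rw [psum]
  congr 1
  ext j
  simp [j.2]

lemma psum_succ {m t : ℕ} (a : Fin m → Fin (t + 1)) (k : ℕ) (hk : k < m) :
    psum a (k + 1) = psum a k + (a ⟨k, hk⟩ : ℕ) := by
  rw [psum, psum]
  have : univ.filter (fun j : Fin m => (j : ℕ) < k + 1) =
      insert ⟨k, hk⟩ (univ.filter (fun j : Fin m => (j : ℕ) < k)) := by
    ext j
    simp only [mem_filter, mem_univ, true_and, mem_insert, Fin.ext_iff]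
    omega
  rw [this, sum_insert (by simp)]
  omega

lemma psum_lower {m t : ℕ} (a : Fin m → Fin (t + 1)) (ha : ∀ i, 1 ≤ (a i : ℕ)) :
    ∀ k, k ≤ m → k ≤ psum a k := by
  intro k
  induction k with
  | zero => intro _; omega
  | succ k ih =>
    intro hk
    rw [psum_succ a k (by omega)]
    have := ha ⟨k, by omega⟩
    have := ih (by omega)
    omega

lemma psum_upper {m t : ℕ} (a : Fin m → Fin (t + 1)) (ha : ∀ i, 1 ≤ (a i : ℕ))
    (has : ∑ i, (a i : ℕ) = t) : ∀ d k, k + d = m → psum a k + d ≤ t := by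
  intro d
  induction d with
  | zero => intro k hk; rw [(by omega : k = m), psum_top, has]; omega
  | succ d ih =>
    intro k hk
    have h1 : psum a (k + 1) = psum a k + (a ⟨k, by omega⟩ : ℕ) := psum_succ a k (by omega)
    have h2 := ih (k + 1) (by omega)
    have := ha ⟨k, by omega⟩
    omega

lemma psum_mono {m t : ℕ} (a : Fin m → Fin (t + 1)) {k l : ℕ} (h : k ≤ l) :
    psum a k ≤ psum a l := by
  apply sum_le_sum_of_subset
  intro j hj
  simp only [mem_filter, mem_univ, true_and] at *
  omega

/-- number of compositions of `t` into `m` positive parts is at most `(t-1).choose (m-1)` -/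
lemma card_comp_le (m t : ℕ) :
    (univ.filter fun a : Fin m → Fin (t + 1) =>
        (∀ i, 1 ≤ (a i : ℕ)) ∧ ∑ i, (a i : ℕ) = t).card ≤ (t - 1).choose (m - 1) := by
  classical
  have htarget : ((univ : Finset (Fin (t - 1))).powersetCard (m - 1)).card =
      (t - 1).choose (m - 1) := by
    rw [card_powersetCard, card_univ, Fintype.card_fin]
  rw [← htarget]
  apply card_le_card_of_injOn
    (fun a => univ.filter fun i : Fin (t - 1) =>
      ∃ k : ℕ, k + 1 < m ∧ (i : ℕ) + 1 = psum a (k + 1))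
  · -- maps to powersetCard
    intro a ha
    simp only [mem_coe, coe_filter, Set.mem_setOf_eq, mem_filter, mem_univ, true_and] at ha ⊢
    obtain ⟨ha1, ha2⟩ := ha
    rw [mem_powersetCard_univ]
    -- the filter equals the image of a strictly monotone map
    by_cases hm : 2 ≤ m
    · have hbound : ∀ j : Fin (m - 1), psum a ((j : ℕ) + 1) - 1 < t - 1 := by
        intro j
        have hj : (j : ℕ) + 1 < m := by omega
        have h1 := psum_lower a ha1 ((j : ℕ) + 1) (by omega)
        have h2 := psum_upper a ha1 ha2 (m - ((j : ℕ) + 1)) ((j : ℕ) + 1) (by omega)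
        omega
      set g : Fin (m - 1) → Fin (t - 1) :=
        fun j => ⟨psum a ((j : ℕ) + 1) - 1, hbound j⟩ with hg
      have hgmono : StrictMono g := by
        intro j j' hjj
        have h1 : psum a ((j : ℕ) + 1) + (a ⟨(j : ℕ) + 1, by omega⟩ : ℕ) =
            psum a ((j : ℕ) + 2) := (psum_succ a _ (by omega)).symm
        have h2 : psum a ((j : ℕ) + 2) ≤ psum a ((j' : ℕ) + 1) := psum_mono a (by omega)
        have h3 := ha1 ⟨(j : ℕ) + 1, by omega⟩
        have h4 := psum_lower a ha1 ((j : ℕ) + 1) (by omega)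
        simp only [hg, Fin.mk_lt_mk]
        omega
      have himg : (univ.filter fun i : Fin (t - 1) =>
          ∃ k : ℕ, k + 1 < m ∧ (i : ℕ) + 1 = psum a (k + 1)) = image g univ := by
        ext i
        simp only [mem_filter, mem_univ, true_and, mem_image]
        constructor
        · rintro ⟨k, hk, hik⟩
          refine ⟨⟨k, by omega⟩, Fin.ext ?_⟩
          have h4 := psum_lower a ha1 (k + 1) (by omega)
          show psum a (k + 1) - 1 = (i : ℕ)
          omega
        · rintro ⟨j, rfl⟩
          refine ⟨(j : ℕ), by omega, ?_⟩
          have h4 := psum_lower a ha1 ((j : ℕ) + 1) (by omega)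
          show ((⟨psum a ((j : ℕ) + 1) - 1, hbound j⟩ : Fin (t - 1)) : ℕ) + 1 =
            psum a ((j : ℕ) + 1)
          simp only
          omega
      rw [himg, card_image_of_injective _ hgmono.injective, card_univ, Fintype.card_fin]
    · -- m ≤ 1 : filter is empty and m - 1 = 0
      have : (univ.filter fun i : Fin (t - 1) =>
          ∃ k : ℕ, k + 1 < m ∧ (i : ℕ) + 1 = psum a (k + 1)) = ∅ := by
        ext i
        simp only [mem_filter, mem_univ, true_and, notMem_empty, iff_false]
        rintro ⟨k, hk, _⟩
        omega
      rw [this]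
      simp
      omega
  · -- injective on the filtered set
    intro a ha a' ha' heq
    simp only [coe_filter, Set.mem_setOf_eq, mem_univ, true_and] at ha ha'
    obtain ⟨ha1, ha2⟩ := ha
    obtain ⟨ha1', ha2'⟩ := ha'
    have heq' : (univ.filter fun i : Fin (t - 1) =>
        ∃ k : ℕ, k + 1 < m ∧ (i : ℕ) + 1 = psum a (k + 1)) =
        (univ.filter fun i : Fin (t - 1) =>
          ∃ k : ℕ, k + 1 < m ∧ (i : ℕ) + 1 = psum a' (k + 1)) := heq
    have hstrict : ∀ (x : Fin m → Fin (t + 1)), (∀ i, 1 ≤ (x i : ℕ)) →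
        ∀ k l, k < l → l ≤ m → psum x k < psum x l := by
      intro x hx k l hkl hlm
      have h1 : psum x (k + 1) = psum x k + (x ⟨k, by omega⟩ : ℕ) := psum_succ x k (by omega)
      have h2 : psum x (k + 1) ≤ psum x l := psum_mono x (by omega)
      have := hx ⟨k, by omega⟩
      omega
    have hmemgen : ∀ (x x' : Fin m → Fin (t + 1)), (∀ i, 1 ≤ (x i : ℕ)) →
        (∑ i, (x i : ℕ) = t) →
        (univ.filter fun i : Fin (t - 1) =>
          ∃ k : ℕ, k + 1 < m ∧ (i : ℕ) + 1 = psum x (k + 1)) =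
        (univ.filter fun i : Fin (t - 1) =>
          ∃ k : ℕ, k + 1 < m ∧ (i : ℕ) + 1 = psum x' (k + 1)) →
        ∀ k, 1 ≤ k → k < m → ∃ j : ℕ, j + 1 < m ∧ psum x k = psum x' (j + 1) := by
      intro x x' hx1 hx2 he k hk1 hkm
      have hlow := psum_lower x hx1 k (by omega)
      have hup := psum_upper x hx1 hx2 (m - k) k (by omega)
      have hx0 : (⟨psum x k - 1, by omega⟩ : Fin (t - 1)) ∈
          univ.filter fun i : Fin (t - 1) =>
            ∃ k' : ℕ, k' + 1 < m ∧ (i : ℕ) + 1 = psum x (k' + 1) := by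
        simp only [mem_filter, mem_univ, true_and]
        refine ⟨k - 1, by omega, ?_⟩
        show psum x k - 1 + 1 = psum x (k - 1 + 1)
        rw [(by omega : k - 1 + 1 = k)]
        omega
      rw [he] at hx0
      simp only [mem_filter, mem_univ, true_and] at hx0
      obtain ⟨j, hjm, hval⟩ := hx0
      refine ⟨j, hjm, ?_⟩
      have : psum x k - 1 + 1 = psum x' (j + 1) := hval
      omega
    have hpsum : ∀ k, k ≤ m → psum a k = psum a' k := by
      intro k
      induction k using Nat.strong_induction_on with
      | _ k IH =>
        intro hk
        rcases Nat.eq_zero_or_pos k with rfl | hk0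
        · rw [psum_zero, psum_zero]
        rcases Nat.lt_or_ge k m with hkm | hkm
        · obtain ⟨j, hjm, hj⟩ := hmemgen a a' ha1 ha2 heq' k hk0 hkm
          obtain ⟨j', hjm', hj'⟩ := hmemgen a' a ha1' ha2' heq'.symm k hk0 hkm
          rcases lt_trichotomy (j + 1) k with h | h | h
          · have e := IH (j + 1) (by omega) (by omega)
            have := hstrict a ha1 (j + 1) k h (by omega)
            omega
          · rw [← h] at hj ⊢
            omega
          · rcases lt_trichotomy (j' + 1) k with h2 | h2 | h2
            · have e := IH (j' + 1) (by omega) (by omega)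
              have := hstrict a' ha1' (j' + 1) k h2 (by omega)
              omega
            · rw [← h2] at hj' ⊢
              omega
            · have s1 := hstrict a' ha1' k (j + 1) h (by omega)
              have s2 := hstrict a ha1 k (j' + 1) h2 (by omega)
              omega
        · have hk' : k = m := by omega
          subst hk'
          rw [psum_top, psum_top, ha2, ha2']
    funext i
    have h1 : psum a ((i : ℕ) + 1) = psum a (i : ℕ) + (a i : ℕ) := by
      have := psum_succ a (i : ℕ) i.2
      simpa using this
    have h1' : psum a' ((i : ℕ) + 1) = psum a' (i : ℕ) + (a' i : ℕ) := by
      have := psum_succ a' (i : ℕ) i.2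
      simpa using this
    have e1 := hpsum (i : ℕ) (by omega)
    have e2 := hpsum ((i : ℕ) + 1) (by omega)
    apply Fin.ext
    omega




lemma card_boolfun_le (N c : ℕ) :
    (univ.filter fun F : Fin N → Bool =>
        (univ.filter fun j => F j = false).card = c).card ≤ N.choose c := by
  classical
  have htarget : ((univ : Finset (Fin N)).powersetCard c).card = N.choose c := by
    rw [card_powersetCard, card_univ, Fintype.card_fin]
  rw [← htarget]
  apply card_le_card_of_injOn (fun F => univ.filter fun j => F j = false)
  · intro F hF
    simp only [mem_coe, coe_filter, Set.mem_setOf_eq, mem_filter, mem_univ, true_and] at hF ⊢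
    rw [mem_powersetCard_univ]
    exact hF
  · intro F _ F' _ heq
    have heq' : (univ.filter fun j => F j = false) = (univ.filter fun j => F' j = false) := heq
    funext j
    have : (j ∈ univ.filter fun j => F j = false) ↔
        (j ∈ univ.filter fun j => F' j = false) := by rw [heq']
    simp only [mem_filter, mem_univ, true_and] at this
    cases hFj : F j <;> cases hFj' : F' j <;> simp [hFj, hFj'] at this ⊢

lemma flatten_ofFn_inj : ∀ {k : ℕ} (L L' : Fin k → List Bool),
    (∀ i, (L i).length = (L' i).length) →
    (List.ofFn L).flatten = (List.ofFn L').flatten → L = L' := by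
  intro k
  induction k with
  | zero => intro L L' _ _; funext i; exact i.elim0
  | succ k ih =>
    intro L L' hlen heq
    rw [List.ofFn_succ, List.ofFn_succ, List.flatten_cons, List.flatten_cons] at heq
    obtain ⟨h0, htail⟩ := List.append_inj heq (hlen 0)
    have := ih (fun i => L i.succ) (fun i => L' i.succ) (fun i => hlen i.succ) htail
    funext i
    refine Fin.cases ?_ ?_ i
    · exact h0
    · intro j
      exact congrFun this j

lemma list_eq_of_getD {N : ℕ} (L L' : List Bool) (hL : L.length = N) (hL' : L'.length = N)
    (h : ∀ j : Fin N, L.getD j true = L'.getD j true) : L = L' := by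
  apply List.ext_getElem (by omega)
  intro i h1 h2
  have := h ⟨i, by omega⟩
  rwa [List.getD_eq_getElem L true (by omega), List.getD_eq_getElem L' true (by omega)] at this

lemma count_false_card {N : ℕ} (L : List Bool) (hL : L.length = N) :
    (univ.filter fun j : Fin N => L.getD j true = false).card = L.count false := by
  subst hL
  rw [Finset.card_filter]
  rw [Fin.sum_univ_eq_sum_range (fun j => if L.getD j true = false then 1 else 0)]
  induction L with
  | nil => simp
  | cons a L ih =>
    rw [List.length_cons, Finset.sum_range_succ']
    simp only [List.getD_cons_succ, List.getD_cons_zero]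
    rw [ih, List.count_cons]
    cases a <;> simp

end CountAux

/-- `vNbhd G S` is the external vertex neighborhood `N_G(S)`. -/
def vNbhd {V : Type*} (G : SimpleGraph V) (S : Set V) : Set V :=
  {v | v ∉ S ∧ ∃ u ∈ S, G.Adj u v}

/-- `compDecomp G S m b` says that the subgraph of `G` induced on `S` has exactly `m`
connected components `S₁, …, S_m` and `|N_G(S₁)| + … + |N_G(S_m)| = b`: there is a
partition of `S` into `m` nonempty sets, each inducing a connected subgraph, with no
edges of `G` between different parts, whose external neighborhoods have sizes summing
to `b`. -/
def compDecomp {V : Type*} (G : SimpleGraph V) (S : Set V) (m b : ℕ) : Prop :=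
  ∃ f : Fin m → Set V,
    (∀ i, (f i).Nonempty) ∧
    (∀ i j, i ≠ j → Disjoint (f i) (f j)) ∧
    (⋃ i, f i) = S ∧
    (∀ i, (G.induce (f i)).Connected) ∧
    (∀ i j, i ≠ j → ∀ u ∈ f i, ∀ w ∈ f j, ¬G.Adj u w) ∧
    (∑ i, (vNbhd G (f i)).ncard) = b

/-- Counting sets `S` of size `s` whose induced subgraph has exactly `m` connected
components with external boundaries summing to `b`. -/
theorem count_sets_with_components {V : Type*} [Fintype V] (n : ℕ)
    (hn : Fintype.card V = n) (G : SimpleGraph V) (hconn : G.Connected)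
    (s m b : ℕ) (hs : 1 ≤ s) (hm : 1 ≤ m) (hb : 1 ≤ b) (hsn : s < n) :
    {S : Set V | S.ncard = s ∧ compDecomp G S m b}.ncard ≤
      n.choose m * (s - 1).choose (m - 1) * (b - 1).choose (m - 1) *
        (s + b - m).choose b := by
  classical
  letI : LinearOrder V := LinearOrder.lift' (Fintype.equivFin V) (Fintype.equivFin V).injective
  haveI hneV : Nonempty V := by
    rw [← Fintype.card_pos_iff, hn]; omega
  haveI : DecidableRel G.Adj := Classical.decRel _
  set N := s + b - m with hN
  open Finset CountAux in
  -- the chosen decomposition of `S`, reordered so that the roots increase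
  set comp : ∀ S : Set V, compDecomp G S m b → (Fin m → Finset V) := fun S hS i =>
    (Set.toFinite (Classical.choose hS (Tuple.sort
      (fun j => CountAux.root ((Set.toFinite (Classical.choose hS j)).toFinset)) i))).toFinset
    with hcomp
  have main : ∀ (S : Set V) (hc : S.ncard = s) (hS : compDecomp G S m b),
      (∀ i, (comp S hS i).Nonempty) ∧
      (∀ i, (G.induce ((comp S hS i : Finset V) : Set V)).Connected) ∧
      ((⋃ i, ((comp S hS i : Finset V) : Set V)) = S) ∧
      (∑ i, (comp S hS i).card = s) ∧
      (∑ i, (CountAux.bdF G (comp S hS i)).card = b) ∧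
      (∀ i, (CountAux.bdF G (comp S hS i)).Nonempty) ∧
      StrictMono (fun i => CountAux.root (comp S hS i)) := by
    intro S hc hS
    obtain ⟨h1, h2, h3, h4, h5, h6⟩ := Classical.choose_spec hS
    set f := Classical.choose hS with hf
    set A0 : Fin m → Finset V := fun j => (Set.toFinite (f j)).toFinset with hA0
    set σ := Tuple.sort (fun j => CountAux.root (A0 j)) with hσ
    have hcompeq : ∀ i, comp S hS i = A0 (σ i) := fun i => rfl
    have hcoe : ∀ j, ((A0 j : Finset V) : Set V) = f j := fun j => (Set.toFinite (f j)).coe_toFinset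
    have hA0ne : ∀ j, (A0 j).Nonempty := fun j => (Set.toFinite (f j)).toFinset_nonempty.2 (h1 j)
    have hdisj : ∀ i j, i ≠ j → Disjoint (A0 i) (A0 j) := by
      intro i j hij
      rw [← Finset.disjoint_coe, hcoe, hcoe]
      exact h2 i j hij
    have hrinj : Function.Injective (fun j => CountAux.root (A0 j)) := by
      intro i j hij
      simp only at hij
      by_contra hneq
      refine (Finset.disjoint_left.1 (hdisj i j hneq)) (CountAux.root_mem _ (hA0ne i)) ?_
      rw [hij]
      exact CountAux.root_mem _ (hA0ne j)
    have hsum : ∑ i, (A0 i).card = s := by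
      have hbU : ((Finset.univ.biUnion A0 : Finset V) : Set V) = S := by
        rw [Finset.coe_biUnion, ← h3]
        simp [hcoe]
      have hcards : (Finset.univ.biUnion A0).card = ∑ i, (A0 i).card :=
        Finset.card_biUnion (fun i _ j _ hij => hdisj i j hij)
      rw [← hcards, ← Set.ncard_coe_finset, hbU, hc]
    have hbd : ∀ j, vNbhd G (f j) = ((CountAux.bdF G (A0 j) : Finset V) : Set V) := by
      intro j
      ext x
      simp only [vNbhd, Set.mem_setOf_eq, Finset.mem_coe, CountAux.mem_bdF,
        Set.Finite.mem_toFinset, hA0]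
    have hsumbd : ∑ i, (CountAux.bdF G (A0 i)).card = b := by
      rw [← h6]
      refine Finset.sum_congr rfl fun j _ => ?_
      rw [hbd j, Set.ncard_coe_finset]
    have hbdne : ∀ j, (CountAux.bdF G (A0 j)).Nonempty := by
      intro j
      refine CountAux.bdF_nonempty G hconn _ (hA0ne j) ?_
      intro hun
      have hle : (A0 j).card ≤ ∑ i, (A0 i).card :=
        Finset.single_le_sum (f := fun i => (A0 i).card) (fun i _ => Nat.zero_le _)
          (Finset.mem_univ j)
      rw [hsum, hun, Finset.card_univ, hn] at hle
      omega
    have hconn0 : ∀ j, (G.induce ((A0 j : Finset V) : Set V)).Connected := by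
      intro j
      rw [hcoe j]
      exact h4 j
    refine ⟨fun i => by rw [hcompeq i]; exact hA0ne _,
      fun i => by rw [hcompeq i]; exact hconn0 _, ?_, ?_, ?_,
      fun i => by rw [hcompeq i]; exact hbdne _, ?_⟩
    · calc (⋃ i, ((comp S hS i : Finset V) : Set V))
          = ⋃ i, ((A0 (σ i) : Finset V) : Set V) := by
            exact Set.iUnion_congr fun i => by rw [hcompeq i]
        _ = ⋃ i, ((A0 i : Finset V) : Set V) :=
            Function.Surjective.iUnion_comp σ.surjective (fun i => ((A0 i : Finset V) : Set V))
        _ = ⋃ i, f i := Set.iUnion_congr hcoe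
        _ = S := h3
    · calc ∑ i, (comp S hS i).card = ∑ i, (A0 (σ i)).card :=
            Finset.sum_congr rfl fun i _ => by rw [hcompeq i]
        _ = ∑ i, (A0 i).card := Equiv.sum_comp σ (fun i => (A0 i).card)
        _ = s := hsum
    · calc ∑ i, (CountAux.bdF G (comp S hS i)).card
          = ∑ i, (CountAux.bdF G (A0 (σ i))).card :=
            Finset.sum_congr rfl fun i _ => by rw [hcompeq i]
        _ = ∑ i, (CountAux.bdF G (A0 i)).card := Equiv.sum_comp σ (fun i => (CountAux.bdF G (A0 i)).card)
        _ = b := hsumbd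
    · have hmono : Monotone ((fun j => CountAux.root (A0 j)) ∘ σ) :=
        Tuple.monotone_sort (fun j => CountAux.root (A0 j))
      have : StrictMono ((fun j => CountAux.root (A0 j)) ∘ σ) :=
        hmono.strictMono_of_injective (hrinj.comp σ.injective)
      intro i j hij
      have h2' := this hij
      simp only [Function.comp] at h2'
      show CountAux.root (comp S hS i) < CountAux.root (comp S hS j)
      rw [hcompeq i, hcompeq j]
      exact h2'
  -- the encoding map
  set Φ : Set V → Finset V × (Fin m → Fin (s + 1)) × (Fin m → Fin (b + 1)) × (Fin N → Bool) :=
    fun S =>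
      if hS : compDecomp G S m b then
        (Finset.image (fun i => CountAux.root (comp S hS i)) Finset.univ,
         fun i => ⟨min (comp S hS i).card s, by omega⟩,
         fun i => ⟨min (CountAux.bdF G (comp S hS i)).card b, by omega⟩,
         fun j => (List.ofFn fun i => CountAux.encode1 G (comp S hS i)).flatten.getD j true)
      else (∅, fun _ => ⟨0, by omega⟩, fun _ => ⟨0, by omega⟩, fun _ => true)
    with hΦ
  set T1 : Finset (Finset V) := Finset.powersetCard m Finset.univ with hT1
  set T2 : Finset (Fin m → Fin (s + 1)) := Finset.univ.filter
    (fun a => (∀ i, 1 ≤ (a i : ℕ)) ∧ ∑ i, (a i : ℕ) = s) with hT2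
  set T3 : Finset (Fin m → Fin (b + 1)) := Finset.univ.filter
    (fun c => (∀ i, 1 ≤ (c i : ℕ)) ∧ ∑ i, (c i : ℕ) = b) with hT3
  set T4 : Finset (Fin N → Bool) := Finset.univ.filter
    (fun F => (Finset.univ.filter fun j => F j = false).card = b) with hT4
  set T := T1 ×ˢ T2 ×ˢ T3 ×ˢ T4 with hT
  -- length of the concatenated string
  have hflatlen : ∀ (S : Set V) (hc : S.ncard = s) (hS : compDecomp G S m b),
      (List.ofFn fun i => CountAux.encode1 G (comp S hS i)).flatten.length = N := by
    intro S hc hS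
    obtain ⟨F1, F2, F3, F4, F5, F6, F7⟩ := main S hc hS
    have hlenpiece : ∀ i, (CountAux.encode1 G (comp S hS i)).length + 1 =
        (comp S hS i).card + (CountAux.bdF G (comp S hS i)).card :=
      fun i => (CountAux.component_props G _ (F1 i) (F2 i)).2.1
    rw [List.length_flatten, List.map_ofFn, List.sum_ofFn]
    have e1 : ∑ i, ((CountAux.encode1 G (comp S hS i)).length + 1) =
        ∑ i, ((comp S hS i).card + (CountAux.bdF G (comp S hS i)).card) :=
      Finset.sum_congr rfl fun i _ => hlenpiece i
    rw [Finset.sum_add_distrib, Finset.sum_add_distrib, F4, F5] at e1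
    simp only [Finset.sum_const, Finset.card_univ, Fintype.card_fin, smul_eq_mul,
      mul_one] at e1
    have hms : m ≤ s := by
      calc m = ∑ _i : Fin m, 1 := by simp
        _ ≤ ∑ i, (comp S hS i).card :=
            Finset.sum_le_sum fun i _ => Finset.card_pos.2 (F1 i)
        _ = s := F4
    show ∑ i, (List.length ∘ fun i => CountAux.encode1 G (comp S hS i)) i = N
    simp only [Function.comp]
    omega
  -- membership of the image
  have hmaps : ∀ S ∈ {S : Set V | S.ncard = s ∧ compDecomp G S m b}, Φ S ∈ (T : Set _) := by
    rintro S ⟨hc, hS⟩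
    obtain ⟨F1, F2, F3, F4, F5, F6, F7⟩ := main S hc hS
    have hcle : ∀ i, (comp S hS i).card ≤ s := by
      intro i
      rw [← F4]
      exact Finset.single_le_sum (f := fun i => (comp S hS i).card) (fun i _ => Nat.zero_le _)
        (Finset.mem_univ i)
    have hble : ∀ i, (CountAux.bdF G (comp S hS i)).card ≤ b := by
      intro i
      rw [← F5]
      exact Finset.single_le_sum (f := fun i => (CountAux.bdF G (comp S hS i)).card)
        (fun i _ => Nat.zero_le _) (Finset.mem_univ i)
    simp only [hΦ]
    rw [dif_pos hS]
    simp only [hT, Finset.mem_coe, Finset.mem_product]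
    refine ⟨?_, ?_, ?_, ?_⟩
    · rw [hT1, Finset.mem_powersetCard_univ, Finset.card_image_of_injective _ F7.injective,
        Finset.card_univ, Fintype.card_fin]
    · rw [hT2, Finset.mem_filter]
      refine ⟨Finset.mem_univ _, fun i => ?_, ?_⟩
      · show 1 ≤ min (comp S hS i).card s
        have := Finset.card_pos.2 (F1 i)
        omega
      · show ∑ i, min (comp S hS i).card s = s
        calc ∑ i, min (comp S hS i).card s = ∑ i, (comp S hS i).card :=
              Finset.sum_congr rfl fun i _ => min_eq_left (hcle i)
          _ = s := F4
    · rw [hT3, Finset.mem_filter]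
      refine ⟨Finset.mem_univ _, fun i => ?_, ?_⟩
      · show 1 ≤ min (CountAux.bdF G (comp S hS i)).card b
        have := Finset.card_pos.2 (F6 i)
        omega
      · show ∑ i, min (CountAux.bdF G (comp S hS i)).card b = b
        calc ∑ i, min (CountAux.bdF G (comp S hS i)).card b
            = ∑ i, (CountAux.bdF G (comp S hS i)).card :=
              Finset.sum_congr rfl fun i _ => min_eq_left (hble i)
          _ = b := F5
    · rw [hT4, Finset.mem_filter]
      refine ⟨Finset.mem_univ _, ?_⟩
      have hcf := CountAux.count_false_card
        ((List.ofFn fun i => CountAux.encode1 G (comp S hS i)).flatten) (hflatlen S hc hS)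
      rw [hcf, List.count_flatten, List.map_ofFn, List.sum_ofFn]
      calc ∑ i, (List.count false ∘ fun i => CountAux.encode1 G (comp S hS i)) i
          = ∑ i, (CountAux.bdF G (comp S hS i)).card := by
            refine Finset.sum_congr rfl fun i _ => ?_
            simp only [Function.comp]
            exact (CountAux.component_props G _ (F1 i) (F2 i)).2.2
        _ = b := F5
  -- injectivity
  have hinj : Set.InjOn Φ {S : Set V | S.ncard = s ∧ compDecomp G S m b} := by
    rintro S ⟨hc, hS⟩ S' ⟨hc', hS'⟩ heq
    obtain ⟨F1, F2, F3, F4, F5, F6, F7⟩ := main S hc hS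
    obtain ⟨F1', F2', F3', F4', F5', F6', F7'⟩ := main S' hc' hS'
    simp only [hΦ] at heq
    rw [dif_pos hS, dif_pos hS'] at heq
    simp only [Prod.mk.injEq] at heq
    obtain ⟨hR, ha, hc2, hF⟩ := heq
    -- the roots agree
    have hcardR : (Finset.image (fun i => CountAux.root (comp S hS i)) Finset.univ).card = m := by
      rw [Finset.card_image_of_injective _ F7.injective, Finset.card_univ, Fintype.card_fin]
    have e1 := Finset.orderEmbOfFin_unique hcardR
      (fun i => Finset.mem_image_of_mem _ (Finset.mem_univ i)) F7
    have e2 := Finset.orderEmbOfFin_unique hcardR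
      (f := fun i => CountAux.root (comp S' hS' i))
      (fun i => by rw [hR]; exact Finset.mem_image_of_mem _ (Finset.mem_univ i)) F7'
    have hroot : ∀ i, CountAux.root (comp S hS i) = CountAux.root (comp S' hS' i) := by
      intro i
      rw [congrFun e1 i, congrFun e2 i]
    -- the cardinalities agree
    have hcle : ∀ i, (comp S hS i).card ≤ s := by
      intro i; rw [← F4]
      exact Finset.single_le_sum (f := fun i => (comp S hS i).card) (fun i _ => Nat.zero_le _)
        (Finset.mem_univ i)
    have hcle' : ∀ i, (comp S' hS' i).card ≤ s := by
      intro i; rw [← F4']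
      exact Finset.single_le_sum (f := fun i => (comp S' hS' i).card) (fun i _ => Nat.zero_le _)
        (Finset.mem_univ i)
    have hble : ∀ i, (CountAux.bdF G (comp S hS i)).card ≤ b := by
      intro i; rw [← F5]
      exact Finset.single_le_sum (f := fun i => (CountAux.bdF G (comp S hS i)).card)
        (fun i _ => Nat.zero_le _) (Finset.mem_univ i)
    have hble' : ∀ i, (CountAux.bdF G (comp S' hS' i)).card ≤ b := by
      intro i; rw [← F5']
      exact Finset.single_le_sum (f := fun i => (CountAux.bdF G (comp S' hS' i)).card)
        (fun i _ => Nat.zero_le _) (Finset.mem_univ i)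
    have hcards : ∀ i, (comp S hS i).card = (comp S' hS' i).card := by
      intro i
      have hv : min (comp S hS i).card s = min (comp S' hS' i).card s :=
        congrArg Fin.val (congrFun ha i)
      have := hcle i
      have := hcle' i
      omega
    have hbds : ∀ i, (CountAux.bdF G (comp S hS i)).card =
        (CountAux.bdF G (comp S' hS' i)).card := by
      intro i
      have hv : min (CountAux.bdF G (comp S hS i)).card b =
          min (CountAux.bdF G (comp S' hS' i)).card b :=
        congrArg Fin.val (congrFun hc2 i)
      have := hble i
      have := hble' i
      omega
    -- the encoded strings agree
    have hLlen : ∀ i, (CountAux.encode1 G (comp S hS i)).length =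
        (CountAux.encode1 G (comp S' hS' i)).length := by
      intro i
      have p1 := (CountAux.component_props G _ (F1 i) (F2 i)).2.1
      have p2 := (CountAux.component_props G _ (F1' i) (F2' i)).2.1
      rw [hcards i, hbds i] at p1
      omega
    have hflat : (List.ofFn fun i => CountAux.encode1 G (comp S hS i)).flatten =
        (List.ofFn fun i => CountAux.encode1 G (comp S' hS' i)).flatten := by
      exact CountAux.list_eq_of_getD _ _ (hflatlen S hc hS) (hflatlen S' hc' hS')
        (fun j => congrFun hF j)
    have hL := CountAux.flatten_ofFn_inj _ _ hLlen hflat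
    -- components agree
    have hsame : ∀ i, comp S hS i = comp S' hS' i := by
      intro i
      have d1 := (CountAux.component_props G _ (F1 i) (F2 i)).1
      have d2 := (CountAux.component_props G _ (F1' i) (F2' i)).1
      rw [← d1, ← d2, congrFun hL i, hroot i]
    rw [← F3, ← F3']
    exact Set.iUnion_congr fun i => by rw [hsame i]
  -- count
  have step1 : {S : Set V | S.ncard = s ∧ compDecomp G S m b}.ncard ≤ T.card := by
    rw [← Set.ncard_coe_finset]
    exact Set.ncard_le_ncard_of_injOn Φ hmaps hinj T.finite_toSet
  have hT1card : T1.card = n.choose m := by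
    rw [hT1, Finset.card_powersetCard, Finset.card_univ, hn]
  calc {S : Set V | S.ncard = s ∧ compDecomp G S m b}.ncard ≤ T.card := step1
    _ = T1.card * (T2.card * (T3.card * T4.card)) := by
        rw [hT, Finset.card_product, Finset.card_product, Finset.card_product]
    _ ≤ n.choose m * ((s - 1).choose (m - 1) * ((b - 1).choose (m - 1) * N.choose b)) := by
        refine Nat.mul_le_mul hT1card.le (Nat.mul_le_mul ?_ (Nat.mul_le_mul ?_ ?_))
        · exact CountAux.card_comp_le m s
        · exact CountAux.card_comp_le m b
        · exact CountAux.card_boolfun_le N b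
    _ = n.choose m * (s - 1).choose (m - 1) * (b - 1).choose (m - 1) *
        (s + b - m).choose b := by rw [hN]; ring
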